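/- If p is a homogeneous polynomial hyperbolic with respect to direction e and t_0 ∈ ℝ, then γ := min over critical points t of p_x (where p_x(t) = p(te + x)) of |p_x(t)| has the property that p_x + δ is real-rooted for all |δ| ≤ γ. -/

import Mathlib

open Polynomial

/-- A univariate real polynomial is real-rooted if it splits over ℝ. -/
def RealRooted (q : Polynomial ℝ) : Prop := (q.map (RingHom.id ℝ)).Splits

section Auxiliary

open Filter Set


lemma signAgree (v δ : ℝ) (h : |δ| ≤ |v|) (h2 : v + δ ≠ 0) : 0 < (v + δ) * v := by
  rcases le_or_gt 0 v with hv | hv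
  · rw [abs_of_nonneg hv] at h
    have h3 : 0 ≤ v + δ := by linarith [neg_abs_le δ]
    have h4 : 0 < v + δ := h3.lt_of_ne (Ne.symm h2)
    have h5 : 0 < v := by linarith [le_abs_self δ]
    exact mul_pos h4 h5
  · rw [abs_of_neg hv] at h
    have h3 : v + δ ≤ 0 := by linarith [le_abs_self δ]
    have h4 : v + δ < 0 := h3.lt_of_ne h2
    exact mul_pos_of_neg_of_neg h4 hv

lemma signFlip (a b δ : ℝ) (ha : |δ| ≤ |a|) (hb : |δ| ≤ |b|) (hab : a * b < 0)
    (h1 : a + δ ≠ 0) (h2 : b + δ ≠ 0) : (a + δ) * (b + δ) < 0 := by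
  have A := signAgree a δ ha h1
  have B := signAgree b δ hb h2
  nlinarith [mul_pos A B]

theorem splits_add_C (q : Polynomial ℝ) (hsplits : q.Splits)
    (γ δ : ℝ) (hδγ : |δ| ≤ γ)
    (hγ : ∀ t, q.derivative.eval t = 0 → γ ≤ |q.eval t|) :
    (q + C δ).Splits := by
  by_cases hδ : δ = 0
  · simpa [hδ] using hsplits
  by_cases hm0 : q.natDegree = 0
  · rw [Polynomial.eq_C_of_natDegree_eq_zero hm0, ← C_add]
    exact Splits.C _
  set m := q.natDegree with hmdef
  have hm : 1 ≤ m := Nat.one_le_iff_ne_zero.2 hm0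
  have hq0 : q ≠ 0 := fun h => hm0 (by simp [hmdef, h])
  have hδpos : 0 < |δ| := abs_pos.2 hδ
  have hγpos : 0 < γ := lt_of_lt_of_le hδpos hδγ
  have hq' : q.derivative ≠ 0 := fun h => hm0 (natDegree_eq_zero_of_derivative_eq_zero h)
  -- no multiple roots of q
  have hmult : ∀ x : ℝ, rootMultiplicity x q ≤ 1 := by
    intro x
    by_contra h
    push_neg at h
    have hroot : q.IsRoot x := (rootMultiplicity_pos hq0).1 (by omega)
    have hd : (derivative q).rootMultiplicity x = q.rootMultiplicity x - 1 :=
      derivative_rootMultiplicity_of_root hroot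
    have : 0 < (derivative q).rootMultiplicity x := by omega
    have hdx : q.derivative.IsRoot x := (rootMultiplicity_pos hq').1 this
    have := hγ x hdx
    rw [hroot] at this
    simp at this
    linarith
  have hnodup : q.roots.Nodup := by
    rw [Multiset.nodup_iff_count_le_one]
    intro a
    rw [count_roots]
    exact hmult a
  have hcard : Multiset.card q.roots = m := splits_iff_card_roots.1 hsplits
  have hRcard : q.roots.toFinset.card = m := by
    rw [Multiset.toFinset_card_of_nodup hnodup, hcard]
  set r : Fin m → ℝ := fun i => q.roots.toFinset.orderEmbOfFin hRcard i with hrdef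
  have hrmono : StrictMono r := (q.roots.toFinset.orderEmbOfFin hRcard).strictMono
  have hrroot : ∀ i, q.IsRoot (r i) := by
    intro i
    have := Finset.orderEmbOfFin_mem q.roots.toFinset hRcard i
    rw [Multiset.mem_toFinset] at this
    exact isRoot_of_mem_roots this
  have himg : Finset.univ.image r = q.roots.toFinset := by
    apply Finset.coe_injective
    rw [Finset.coe_image, Finset.coe_univ, Set.image_univ]
    exact Finset.range_orderEmbOfFin _ _
  have hrootseq : q.roots = Multiset.map r Finset.univ.val := by
    have h2 : q.roots.toFinset.val = q.roots := by
      rw [Multiset.toFinset_val, hnodup.dedup]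
    rw [← h2, ← himg, Finset.image_val_of_injOn (hrmono.injective.injOn)]
  have hfact : ∀ y : ℝ, q.eval y = q.leadingCoeff * ∏ i : Fin m, (y - r i) := by
    intro y
    conv_lhs => rw [hsplits.eq_prod_roots]
    rw [eval_mul, eval_C, eval_multiset_prod, hrootseq]
    congr 1
    rw [Finset.prod_eq_multiset_prod]
    congr 1
    simp only [Multiset.map_map]
    apply Multiset.map_congr rfl
    intro z _
    simp
  have htop : Tendsto (fun y => |q.eval y|) atTop atTop :=
    abs_tendsto_atTop q (natDegree_pos_iff_degree_pos.1 hm)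
  have hbot : Tendsto (fun y => |q.eval y|) atBot atTop := by
    have hq2 : (q.comp (-X)).natDegree = m := by
      rw [natDegree_comp]
      simp [← hmdef]
    have h2 : Tendsto (fun y => |(q.comp (-X)).eval y|) atTop atTop :=
      abs_tendsto_atTop _ (natDegree_pos_iff_degree_pos.1 (by omega : 1 ≤ (q.comp (-X)).natDegree))
    have h3 := h2.comp tendsto_neg_atBot_atTop
    refine h3.congr ?_
    intro y
    simp [Function.comp, eval_comp]
  have hspts : ∀ j : Fin (m+1), ∃ y : ℝ,
      (∀ i : Fin m, ((j:ℕ) ≤ (i:ℕ) → y < r i) ∧ ((i:ℕ) < (j:ℕ) → r i < y)) ∧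
      |δ| ≤ |q.eval y| ∧ (q.derivative.eval y = 0 ∨ |δ| < |q.eval y|) := by
    intro j
    rcases Nat.eq_zero_or_pos (j:ℕ) with hj0 | hjpos
    · obtain ⟨y, hy1, hy2⟩ := ((hbot.eventually_gt_atTop |δ|).and (eventually_lt_atBot (r ⟨0, hm⟩))).exists
      refine ⟨y, ?_, hy1.le, Or.inr hy1⟩
      intro i
      refine ⟨fun _ => ?_, fun hlt => by omega⟩
      exact lt_of_lt_of_le hy2 (hrmono.monotone (by simp [Fin.le_def]))
    · rcases Nat.lt_or_ge (j:ℕ) m with hjm | hjm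
      · have hi0 : (j:ℕ) - 1 < m := by omega
        set i0 : Fin m := ⟨(j:ℕ)-1, hi0⟩ with hi0def
        set i1 : Fin m := ⟨(j:ℕ), hjm⟩ with hi1def
        have hlt : r i0 < r i1 := hrmono (Fin.lt_def.2 (show (j:ℕ)-1 < (j:ℕ) by omega))
        have hcont : ContinuousOn (fun t => q.eval t) (Icc (r i0) (r i1)) :=
          (Polynomial.continuous q).continuousOn
        obtain ⟨c, hc, hderivc⟩ := exists_deriv_eq_zero hlt hcont
          (((hrroot i0).eq_zero).trans ((hrroot i1).eq_zero).symm)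
        rw [Polynomial.deriv] at hderivc
        have hcrit := hγ c hderivc
        refine ⟨c, ?_, le_trans hδγ hcrit, Or.inl hderivc⟩
        intro i
        constructor
        · intro hji
          have h5 : i1 ≤ i := by simp [Fin.le_def, hi1def]; omega
          exact lt_of_lt_of_le hc.2 (hrmono.monotone h5)
        · intro hij
          have h5 : i ≤ i0 := by simp [Fin.le_def, hi0def]; omega
          exact lt_of_le_of_lt (hrmono.monotone h5) hc.1
      · obtain ⟨y, hy1, hy2⟩ := ((htop.eventually_gt_atTop |δ|).and (eventually_gt_atTop (r ⟨m-1, by omega⟩))).exists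
        refine ⟨y, ?_, hy1.le, Or.inr hy1⟩
        intro i
        constructor
        · intro h5
          exfalso
          have := i.isLt
          have := j.isLt
          omega
        · intro _
          exact lt_of_le_of_lt (hrmono.monotone (by have := i.isLt; simp only [Fin.le_def]; omega : i ≤ ⟨m-1, by omega⟩)) hy2
  choose s hs_ using hspts
  have hsmono : StrictMono s := by
    intro j j' hjj'
    have hjj : (j:ℕ) < (j':ℕ) := hjj'
    have him : (j:ℕ) < m := by have := j'.isLt; omega
    have ha := ((hs_ j).1 ⟨(j:ℕ), him⟩).1 (le_refl _)
    have hb := ((hs_ j').1 ⟨(j:ℕ), him⟩).2 (by simpa using hjj)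
    exact ha.trans hb
  set f : Polynomial ℝ := q + C δ with hfdef
  have hfeval : ∀ t, f.eval t = q.eval t + δ := by intro t; simp [hfdef]
  have hfderiv : f.derivative = q.derivative := by simp [hfdef]
  have hfnd : f.natDegree = m := natDegree_add_C
  have hf0 : f ≠ 0 := by
    intro h
    rw [h, natDegree_zero] at hfnd
    omega
  have hcrit2 : ∀ j : Fin (m+1), f.eval (s j) = 0 → 2 ≤ rootMultiplicity (s j) f := by
    intro j hfz
    have hqd : q.eval (s j) = -δ := by have := hfeval (s j); rw [hfz] at this; linarith
    have habs : |q.eval (s j)| = |δ| := by rw [hqd, abs_neg]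
    have hderiv0 : q.derivative.eval (s j) = 0 := by
      rcases (hs_ j).2.2 with h | h
      · exact h
      · rw [habs] at h; exact absurd h (lt_irrefl _)
    have hf'ne : f.derivative ≠ 0 := by rw [hfderiv]; exact hq'
    have hroot : f.IsRoot (s j) := hfz
    have h1 : 0 < (derivative f).rootMultiplicity (s j) :=
      (rootMultiplicity_pos hf'ne).2 (by rw [hfderiv]; exact hderiv0)
    have h2 : (derivative f).rootMultiplicity (s j) = f.rootMultiplicity (s j) - 1 :=
      derivative_rootMultiplicity_of_root hroot
    have h3 : 0 < f.rootMultiplicity (s j) := (rootMultiplicity_pos hf0).2 hroot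
    omega
  have hqalt : ∀ j : Fin m, q.eval (s j.castSucc) * q.eval (s j.succ) < 0 := by
    intro j
    have hc2 : (0:ℝ) < q.leadingCoeff ^ 2 :=
      pow_two_pos_of_ne_zero (leadingCoeff_ne_zero.2 hq0)
    rw [hfact (s j.castSucc), hfact (s j.succ)]
    have heq : (q.leadingCoeff * ∏ i : Fin m, (s j.castSucc - r i)) *
        (q.leadingCoeff * ∏ i : Fin m, (s j.succ - r i)) =
        q.leadingCoeff ^ 2 * ∏ i : Fin m, ((s j.castSucc - r i) * (s j.succ - r i)) := by
      rw [Finset.prod_mul_distrib]; ring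
    rw [heq]
    apply mul_neg_of_pos_of_neg hc2
    rw [← Finset.prod_erase_mul _ _ (Finset.mem_univ j)]
    apply mul_neg_of_pos_of_neg
    · apply Finset.prod_pos
      intro i hi
      have hij : i ≠ j := (Finset.mem_erase.1 hi).1
      have hijv : (i:ℕ) ≠ (j:ℕ) := fun h => hij (Fin.ext h)
      rcases Nat.lt_or_ge (i:ℕ) (j:ℕ) with hlt | hge
      · have h1 : r i < s j.castSucc := ((hs_ j.castSucc).1 i).2 (by simpa using hlt)
        have h2 : r i < s j.succ := ((hs_ j.succ).1 i).2 (by simp [Fin.val_succ]; omega)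
        exact mul_pos (by linarith) (by linarith)
      · have h1 : s j.castSucc < r i := ((hs_ j.castSucc).1 i).1 (by simp; omega)
        have h2 : s j.succ < r i := ((hs_ j.succ).1 i).1 (by simp [Fin.val_succ]; omega)
        exact mul_pos_of_neg_of_neg (by linarith) (by linarith)
    · have h1 : s j.castSucc < r j := ((hs_ j.castSucc).1 j).1 (by simp)
      have h2 : r j < s j.succ := ((hs_ j.succ).1 j).2 (by simp)
      exact mul_neg_of_neg_of_pos (by linarith) (by linarith)
  have hivt : ∀ j : Fin m, f.eval (s j.castSucc) ≠ 0 → f.eval (s j.succ) ≠ 0 →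
      ∃ y, y ∈ Ioo (s j.castSucc) (s j.succ) ∧ f.eval y = 0 := by
    intro j h1 h2
    have hlt : s j.castSucc < s j.succ := hsmono (Fin.castSucc_lt_succ (i := j))
    have hcont : ContinuousOn (fun t => f.eval t) (Icc (s j.castSucc) (s j.succ)) :=
      (Polynomial.continuous f).continuousOn
    have hprod : f.eval (s j.castSucc) * f.eval (s j.succ) < 0 := by
      have := signFlip (q.eval (s j.castSucc)) (q.eval (s j.succ)) δ
        ((hs_ j.castSucc).2.1) ((hs_ j.succ).2.1) (hqalt j)
        (by rw [← hfeval]; exact h1) (by rw [← hfeval]; exact h2)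
      rw [hfeval, hfeval]
      exact this
    rcases mul_neg_iff.1 hprod with ⟨hp, hn⟩ | ⟨hn, hp⟩
    · obtain ⟨y, hy, hy0⟩ := intermediate_value_Ioo' hlt.le hcont
        (show (0:ℝ) ∈ Ioo (f.eval (s j.succ)) (f.eval (s j.castSucc)) from ⟨hn, hp⟩)
      exact ⟨y, hy, hy0⟩
    · obtain ⟨y, hy, hy0⟩ := intermediate_value_Ioo hlt.le hcont
        (show (0:ℝ) ∈ Ioo (f.eval (s j.castSucc)) (f.eval (s j.succ)) from ⟨hn, hp⟩)
      exact ⟨y, hy, hy0⟩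
  have haex : ∀ j : Fin m, ∃ y : ℝ, f.eval y = 0 ∧
      (y = s j.castSucc ∨ y = s j.succ ∨ y ∈ Ioo (s j.castSucc) (s j.succ)) := by
    intro j
    by_cases h0 : f.eval (s j.castSucc) = 0
    · exact ⟨s j.castSucc, h0, Or.inl rfl⟩
    by_cases h1 : f.eval (s j.succ) = 0
    · exact ⟨s j.succ, h1, Or.inr (Or.inl rfl)⟩
    obtain ⟨y, hy, hy0⟩ := hivt j h0 h1
    exact ⟨y, hy0, Or.inr (Or.inr hy)⟩
  choose a ha0 ha1 using haex
  have hnoIoo : ∀ (k : Fin (m+1)) (j : Fin m), s k ∉ Ioo (s j.castSucc) (s j.succ) := by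
    intro k j hk
    rcases le_or_gt k j.castSucc with h | h
    · exact absurd hk.1 (not_lt.2 (hsmono.monotone h))
    · have hval : (j:ℕ) < (k:ℕ) := by simpa [Fin.lt_def] using h
      have h' : j.succ ≤ k := by simp [Fin.le_def, Fin.val_succ]; omega
      exact absurd hk.2 (not_lt.2 (hsmono.monotone h'))
  have hcount : ∀ x : ℝ, (Finset.univ.filter (fun j => x = a j)).card ≤ rootMultiplicity x f := by
    intro x
    by_cases hne : (Finset.univ.filter (fun j => x = a j)).Nonempty
    swap
    · rw [Finset.not_nonempty_iff_eq_empty.1 hne]; simp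
    obtain ⟨j, hj⟩ := hne
    have hjx : a j = x := ((Finset.mem_filter.1 hj).2).symm
    have hxroot : f.eval x = 0 := hjx ▸ ha0 j
    by_cases hsx : ∃ k : Fin (m+1), s k = x
    · obtain ⟨k, hk⟩ := hsx
      have h2 : 2 ≤ rootMultiplicity x f := by
        rw [← hk]; exact hcrit2 k (by rw [hk]; exact hxroot)
      refine le_trans ?_ h2
      have hsub : ∀ j' ∈ Finset.univ.filter (fun j => x = a j),
          j'.castSucc = k ∨ j'.succ = k := by
        intro j' hj'
        have hx' : a j' = x := ((Finset.mem_filter.1 hj').2).symm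
        rcases ha1 j' with h | h | h
        · left; exact hsmono.injective (by rw [← h, hx', hk])
        · right; exact hsmono.injective (by rw [← h, hx', hk])
        · exfalso
          rw [hx', ← hk] at h
          exact hnoIoo k j' h
      have hcard2 : (Finset.univ.filter (fun j => x = a j)).card ≤
          (Finset.univ : Finset (Fin 2)).card := by
        apply Finset.card_le_card_of_injOn
          (fun j' => if j'.castSucc = k then (0 : Fin 2) else 1)
          (fun _ _ => Finset.mem_univ _)
        intro x1 hx1 x2 hx2 hval
        rw [Finset.mem_coe] at hx1 hx2
        by_cases c1 : x1.castSucc = k <;> by_cases c2 : x2.castSucc = k <;>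
          simp [c1, c2] at hval
        · exact Fin.castSucc_injective _ (c1.trans c2.symm)
        · have e1 : x1.succ = k := (hsub x1 hx1).resolve_left c1
          have e2 : x2.succ = k := (hsub x2 hx2).resolve_left c2
          exact Fin.succ_injective _ (e1.trans e2.symm)
      simpa using le_trans hcard2 (by simp)
    · have hIoo : ∀ jj : Fin m, a jj = x → x ∈ Ioo (s jj.castSucc) (s jj.succ) := by
        intro jj hjj
        rcases ha1 jj with h | h | h
        · exact absurd ⟨jj.castSucc, by rw [← h, hjj]⟩ hsx
        · exact absurd ⟨jj.succ, by rw [← h, hjj]⟩ hsx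
        · rwa [hjj] at h
      have hsub : Finset.univ.filter (fun j' => x = a j') ⊆ {j} := by
        intro j' hj'
        have hx' : a j' = x := ((Finset.mem_filter.1 hj').2).symm
        have h1 := hIoo j' hx'
        have h2 := hIoo j hjx
        have hjj : j' = j := by
          by_contra hne'
          rcases lt_or_gt_of_ne hne' with hlt | hlt
          · have hle : j'.succ ≤ j.castSucc := by
              simp [Fin.le_def, Fin.val_succ]
              exact hlt
            have h3 := hsmono.monotone hle
            have h4 := h1.2
            have h5 := h2.1
            linarith
          · have hle : j.succ ≤ j'.castSucc := by
              simp [Fin.le_def, Fin.val_succ]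
              exact hlt
            have h3 := hsmono.monotone hle
            have h4 := h2.2
            have h5 := h1.1
            linarith
        simp [hjj]
      refine le_trans (Finset.card_le_card hsub) ?_
      rw [Finset.card_singleton]
      exact (rootMultiplicity_pos hf0).2 hxroot
  have hSle : Multiset.map a Finset.univ.val ≤ f.roots := by
    rw [Multiset.le_iff_count]
    intro x
    rw [count_roots, Multiset.count_map]
    exact le_trans (le_of_eq rfl) (hcount x)
  have hcardle : m ≤ Multiset.card f.roots := by
    have := Multiset.card_le_card hSle
    simpa using this
  have hfinal : Multiset.card f.roots = f.natDegree :=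
    le_antisymm (card_roots' f) (by rw [hfnd]; exact hcardle)
  exact splits_iff_card_roots.2 hfinal

end Auxiliary

/-- If `p` is a homogeneous polynomial hyperbolic with respect to `e`, `x ∈ ℝⁿ`, and
`q(t) = p(te + x)` is the restriction, then whenever `0 ≤ γ ≤ |q(t)|` for every
critical point `t` of `q`, the perturbation `q + δ` is real-rooted for all `|δ| ≤ γ`. -/
theorem realRooted_of_perturbation_below_critical_values
    (n d : ℕ) (p : MvPolynomial (Fin n) ℝ) (hhom : p.IsHomogeneous d)
    (e : Fin n → ℝ) (he : MvPolynomial.eval e p ≠ 0)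
    (hhyp : ∀ (x : Fin n → ℝ) (q : Polynomial ℝ),
      (∀ t : ℝ, q.eval t = MvPolynomial.eval (fun i => t * e i + x i) p) → RealRooted q)
    (x : Fin n → ℝ) (q : Polynomial ℝ)
    (hq : ∀ t : ℝ, q.eval t = MvPolynomial.eval (fun i => t * e i + x i) p)
    (γ : ℝ) (hγ0 : 0 ≤ γ)
    (hγ : ∀ t : ℝ, q.derivative.eval t = 0 → γ ≤ |q.eval t|) :
    ∀ δ : ℝ, |δ| ≤ γ → RealRooted (q + C δ) := by
  intro δ hδ
  have hsplits : q.Splits := by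
    have := hhyp x q hq
    unfold RealRooted at this
    rwa [map_id] at this
  show ((q + C δ).map (RingHom.id ℝ)).Splits
  rw [map_id]
  exact splits_add_C q hsplits γ δ hδ hγ
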